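/- For every n ≥ 1 and all z, w ∈ ℂ^{n+1}, the Levi form of ρ is given by: (d²/dt²)|_{t=0} ρ(z + t·w) + (d²/dt²)|_{t=0} ρ(z + t·(i·w)) = 4‖w‖² + 16|z₁w₂ + z₂w₁|², where t ranges over ℝ. In particular this quantity is strictly positive whenever w ≠ 0, so ρ is strictly plurisubharmonic on ℂ^{n+1}. -/

import Mathlib

open Complex

/-- `ρ(z) := 4|1 − z₁z₂|² + ‖z‖² − 3` on `ℂ^{n+1}`. -/
noncomputable def rho (n : ℕ) (z : Fin (n + 1) → ℂ) : ℝ :=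
  4 * Complex.normSq (1 - z 0 * z 1) + (∑ j : Fin (n + 1), Complex.normSq (z j)) - 3

private lemma poly_deriv2 (a b c d e : ℝ) :
    iteratedDeriv 2 (fun t : ℝ => a + b * t + c * t ^ 2 + d * t ^ 3 + e * t ^ 4) 0 = 2 * c := by
  have H : ∀ x : ℝ, HasDerivAt (fun t : ℝ => a + b * t + c * t ^ 2 + d * t ^ 3 + e * t ^ 4)
      (b + c * (2 * x) + d * (3 * x ^ 2) + e * (4 * x ^ 3)) x := by
    intro x
    have h0 : HasDerivAt (fun _ : ℝ => a) 0 x := hasDerivAt_const x a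
    have h1 : HasDerivAt (fun t : ℝ => b * t) b x := by
      simpa using (hasDerivAt_id x).const_mul b
    have h2 : HasDerivAt (fun t : ℝ => c * t ^ 2) (c * (2 * x)) x := by
      simpa using (hasDerivAt_pow 2 x).const_mul c
    have h3 : HasDerivAt (fun t : ℝ => d * t ^ 3) (d * (3 * x ^ 2)) x := by
      simpa using (hasDerivAt_pow 3 x).const_mul d
    have h4 : HasDerivAt (fun t : ℝ => e * t ^ 4) (e * (4 * x ^ 3)) x := by
      simpa using (hasDerivAt_pow 4 x).const_mul e
    have := (((h0.add h1).add h2).add h3).add h4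
    simpa [Pi.add_def] using this
  have hderiv : deriv (fun t : ℝ => a + b * t + c * t ^ 2 + d * t ^ 3 + e * t ^ 4)
      = fun x : ℝ => b + c * (2 * x) + d * (3 * x ^ 2) + e * (4 * x ^ 3) := by
    funext x; exact (H x).deriv
  have H2 : HasDerivAt (fun x : ℝ => b + c * (2 * x) + d * (3 * x ^ 2) + e * (4 * x ^ 3))
      (c * 2 + d * (3 * (2 * 0)) + e * (4 * (3 * (0:ℝ) ^ 2))) 0 := by
    have h0 : HasDerivAt (fun _ : ℝ => b) 0 (0:ℝ) := hasDerivAt_const 0 b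
    have h1 : HasDerivAt (fun x : ℝ => c * (2 * x)) (c * 2) (0:ℝ) := by
      simpa [mul_assoc] using ((hasDerivAt_id (0:ℝ)).const_mul 2).const_mul c
    have h2 : HasDerivAt (fun x : ℝ => d * (3 * x ^ 2)) (d * (3 * (2 * 0))) (0:ℝ) := by
      simpa [mul_assoc] using ((hasDerivAt_pow 2 (0:ℝ)).const_mul 3).const_mul d
    have h3 : HasDerivAt (fun x : ℝ => e * (4 * x ^ 3)) (e * (4 * (3 * (0:ℝ) ^ 2))) (0:ℝ) := by
      simpa [mul_assoc] using ((hasDerivAt_pow 3 (0:ℝ)).const_mul 4).const_mul e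
    have := ((h0.add h1).add h2).add h3
    simpa [Pi.add_def] using this
  rw [iteratedDeriv_succ, iteratedDeriv_one, hderiv]
  have := H2.deriv
  rw [this]; ring

private lemma expand (n : ℕ) (z w : Fin (n + 1) → ℂ) (t : ℝ) :
    rho n (z + t • w) =
      (4 * Complex.normSq (1 - z 0 * z 1) + (∑ j : Fin (n + 1), Complex.normSq (z j)) - 3)
      + (-8 * ((1 - z 0 * z 1).re * (z 0 * w 1 + z 1 * w 0).re
              + (1 - z 0 * z 1).im * (z 0 * w 1 + z 1 * w 0).im)
          + 2 * ∑ j : Fin (n + 1), ((z j).re * (w j).re + (z j).im * (w j).im)) * t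
      + (4 * Complex.normSq (z 0 * w 1 + z 1 * w 0)
          - 8 * ((1 - z 0 * z 1).re * (w 0 * w 1).re + (1 - z 0 * z 1).im * (w 0 * w 1).im)
          + ∑ j : Fin (n + 1), Complex.normSq (w j)) * t ^ 2
      + (8 * ((z 0 * w 1 + z 1 * w 0).re * (w 0 * w 1).re
              + (z 0 * w 1 + z 1 * w 0).im * (w 0 * w 1).im)) * t ^ 3
      + (4 * Complex.normSq (w 0 * w 1)) * t ^ 4 := by
  have hsum : (∑ j : Fin (n + 1), Complex.normSq ((z + t • w) j))
      = (∑ j : Fin (n + 1), Complex.normSq (z j))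
        + 2 * (∑ j : Fin (n + 1), ((z j).re * (w j).re + (z j).im * (w j).im)) * t
        + (∑ j : Fin (n + 1), Complex.normSq (w j)) * t ^ 2 := by
    rw [Finset.mul_sum, Finset.sum_mul, Finset.sum_mul,
      ← Finset.sum_add_distrib, ← Finset.sum_add_distrib]
    refine Finset.sum_congr rfl fun j _ => ?_
    simp only [Pi.add_apply, Pi.smul_apply, Complex.real_smul, Complex.normSq_apply,
      Complex.add_re, Complex.add_im, Complex.mul_re, Complex.mul_im,
      Complex.ofReal_re, Complex.ofReal_im]
    ring
  simp only [rho, hsum]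
  have h0 : (z + t • w) 0 = z 0 + (t : ℂ) * w 0 := by
    simp [Pi.add_apply, Pi.smul_apply, Complex.real_smul]
  have h1 : (z + t • w) 1 = z 1 + (t : ℂ) * w 1 := by
    simp [Pi.add_apply, Pi.smul_apply, Complex.real_smul]
  rw [h0, h1]
  simp only [Complex.normSq_apply, Complex.sub_re, Complex.sub_im, Complex.add_re,
    Complex.add_im, Complex.mul_re, Complex.mul_im, Complex.one_re, Complex.one_im,
    Complex.ofReal_re, Complex.ofReal_im]
  ring

/-- For every `n ≥ 1` and all `z, w ∈ ℂ^{n+1}`, the Levi form of `ρ` is given by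
`(d²/dt²)|₀ ρ(z + t·w) + (d²/dt²)|₀ ρ(z + t·(i·w)) = 4‖w‖² + 16|z₁w₂ + z₂w₁|²`
(`t` real); in particular this quantity is strictly positive whenever `w ≠ 0`,
so `ρ` is strictly plurisubharmonic on `ℂ^{n+1}`. -/
theorem stmt16 (n : ℕ) (hn : 1 ≤ n) (z w : Fin (n + 1) → ℂ) :
    (iteratedDeriv 2 (fun t : ℝ => rho n (z + t • w)) 0 +
        iteratedDeriv 2 (fun t : ℝ => rho n (z + t • (Complex.I • w))) 0 =
      4 * (∑ j : Fin (n + 1), Complex.normSq (w j)) +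
        16 * Complex.normSq (z 0 * w 1 + z 1 * w 0)) ∧
    (w ≠ 0 →
      0 < 4 * (∑ j : Fin (n + 1), Complex.normSq (w j)) +
        16 * Complex.normSq (z 0 * w 1 + z 1 * w 0)) := by
  constructor
  · have e1 : (fun t : ℝ => rho n (z + t • w)) = fun t : ℝ =>
        (4 * Complex.normSq (1 - z 0 * z 1) + (∑ j : Fin (n + 1), Complex.normSq (z j)) - 3)
        + (-8 * ((1 - z 0 * z 1).re * (z 0 * w 1 + z 1 * w 0).re
                + (1 - z 0 * z 1).im * (z 0 * w 1 + z 1 * w 0).im)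
            + 2 * ∑ j : Fin (n + 1), ((z j).re * (w j).re + (z j).im * (w j).im)) * t
        + (4 * Complex.normSq (z 0 * w 1 + z 1 * w 0)
            - 8 * ((1 - z 0 * z 1).re * (w 0 * w 1).re + (1 - z 0 * z 1).im * (w 0 * w 1).im)
            + ∑ j : Fin (n + 1), Complex.normSq (w j)) * t ^ 2
        + (8 * ((z 0 * w 1 + z 1 * w 0).re * (w 0 * w 1).re
                + (z 0 * w 1 + z 1 * w 0).im * (w 0 * w 1).im)) * t ^ 3
        + (4 * Complex.normSq (w 0 * w 1)) * t ^ 4 :=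
      funext fun t => expand n z w t
    have e2 : (fun t : ℝ => rho n (z + t • (Complex.I • w))) = fun t : ℝ =>
        (4 * Complex.normSq (1 - z 0 * z 1) + (∑ j : Fin (n + 1), Complex.normSq (z j)) - 3)
        + (-8 * ((1 - z 0 * z 1).re * (z 0 * (Complex.I • w) 1 + z 1 * (Complex.I • w) 0).re
                + (1 - z 0 * z 1).im * (z 0 * (Complex.I • w) 1 + z 1 * (Complex.I • w) 0).im)
            + 2 * ∑ j : Fin (n + 1),
                ((z j).re * ((Complex.I • w) j).re + (z j).im * ((Complex.I • w) j).im)) * t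
        + (4 * Complex.normSq (z 0 * (Complex.I • w) 1 + z 1 * (Complex.I • w) 0)
            - 8 * ((1 - z 0 * z 1).re * ((Complex.I • w) 0 * (Complex.I • w) 1).re
                + (1 - z 0 * z 1).im * ((Complex.I • w) 0 * (Complex.I • w) 1).im)
            + ∑ j : Fin (n + 1), Complex.normSq ((Complex.I • w) j)) * t ^ 2
        + (8 * ((z 0 * (Complex.I • w) 1 + z 1 * (Complex.I • w) 0).re
                  * ((Complex.I • w) 0 * (Complex.I • w) 1).re
                + (z 0 * (Complex.I • w) 1 + z 1 * (Complex.I • w) 0).im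
                  * ((Complex.I • w) 0 * (Complex.I • w) 1).im)) * t ^ 3
        + (4 * Complex.normSq ((Complex.I • w) 0 * (Complex.I • w) 1)) * t ^ 4 :=
      funext fun t => expand n z (Complex.I • w) t
    rw [e1, e2, poly_deriv2, poly_deriv2]
    have hw : ∀ j, (Complex.I • w) j = Complex.I * w j := fun j => rfl
    have hs : (∑ j : Fin (n + 1), Complex.normSq ((Complex.I • w) j))
        = ∑ j : Fin (n + 1), Complex.normSq (w j) := by
      refine Finset.sum_congr rfl fun j _ => ?_
      rw [hw]; simp [Complex.normSq_mul]
    rw [hs]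
    simp only [hw]
    simp only [Complex.normSq_apply, Complex.add_re, Complex.add_im, Complex.mul_re,
      Complex.mul_im, Complex.sub_re, Complex.sub_im, Complex.one_re, Complex.one_im,
      Complex.I_re, Complex.I_im]
    ring
  · intro hw
    have h1 : 0 < ∑ j : Fin (n + 1), Complex.normSq (w j) := by
      obtain ⟨j, hj⟩ : ∃ j, w j ≠ 0 := by
        by_contra h
        push_neg at h
        exact hw (funext h)
      refine Finset.sum_pos' (fun i _ => Complex.normSq_nonneg _) ⟨j, Finset.mem_univ j, ?_⟩
      exact Complex.normSq_pos.2 hj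
    have h2 : 0 ≤ Complex.normSq (z 0 * w 1 + z 1 * w 0) := Complex.normSq_nonneg _
    nlinarith
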